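/- For a strategy σ and a set of positions φ on a justified AJM game A: φ is a skeleton of σ if and only if φ is a skeleton (in the abstract sense) and φ• = σ. -/
import Mathlib


/- Justified AJM games, after Abramsky's game semantics for access control. -/

namespace AJM

inductive Pol where
  | P
  | O
deriving DecidableEq

inductive QA where
  | Q
  | Ans
deriving DecidableEq

def Pol.flip : Pol → Pol
  | .P => .O
  | .O => .P

/-- Well-bracketed strings over moves (condition (p4)). -/
inductive WB {M : Type} (lab : M → Pol × QA) (just : M → Option M) : List M → Prop
  | nil : WB lab just []
  | wrap (a q : M) (u : List M) : (lab a).2 = QA.Ans → just a = some q →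
      WB lab just u → WB lab just (q :: (u ++ [a]))
  | append (u v : List M) : WB lab just u → WB lab just v → WB lab just (u ++ v)

/-- Conditions (p1)–(p5): Opponent starts, alternation, linearity,
well-bracketing, justifiers occur before their moves. -/
def ValidSeq {M : Type} (lab : M → Pol × QA) (just : M → Option M) (s : List M) : Prop :=
  (∀ m, s.head? = some m → (lab m).1 = Pol.O) ∧
  List.Chain' (fun m m' => (lab m).1 ≠ (lab m').1) s ∧
  s.Nodup ∧
  (∃ t, s <+: t ∧ WB lab just t) ∧
  (∀ s₁ m s₂, s = s₁ ++ m :: s₂ → ∀ m', just m = some m' → m' ∈ s₁)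

/-- A justified AJM game (the data). -/
structure Game where
  M : Type
  lab : M → Pol × QA
  just : M → Option M
  pos : Set (List M)
  equiv : List M → List M → Prop

namespace Game

/-- The axioms making the data of a `Game` an actual justified AJM game. -/
structure Valid (A : Game) : Prop where
  just_wf : WellFounded fun m m' : A.M => A.just m' = some m
  just_pol : ∀ m m', A.just m = some m' → (A.lab m).1 ≠ (A.lab m').1
  just_qa : ∀ m m', A.just m = some m' → (A.lab m).2 = QA.Ans → (A.lab m').2 = QA.Q
  ans_justified : ∀ m, (A.lab m).2 = QA.Ans → A.just m ≠ none
  pos_nonempty : A.pos.Nonempty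
  pos_prefix_closed : ∀ s t : List A.M, s <+: t → t ∈ A.pos → s ∈ A.pos
  pos_valid : ∀ s ∈ A.pos, ValidSeq A.lab A.just s
  equiv_mem : ∀ s t, A.equiv s t → s ∈ A.pos ∧ t ∈ A.pos
  equiv_refl : ∀ s ∈ A.pos, A.equiv s s
  equiv_symm : ∀ s t, A.equiv s t → A.equiv t s
  equiv_trans : ∀ s t u, A.equiv s t → A.equiv t u → A.equiv s u
  equiv_lab : ∀ s t, A.equiv s t → s.map A.lab = t.map A.lab
  equiv_prefix : ∀ s t s' t', A.equiv s t → s' <+: s → t' <+: t →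
      s'.length = t'.length → A.equiv s' t'
  equiv_ext : ∀ s t a, A.equiv s t → s ++ [a] ∈ A.pos → ∃ b, A.equiv (s ++ [a]) (t ++ [b])

/-- A strategy on a game: a non-empty set of even-length positions that is
causally consistent, representation independent and deterministic. -/
structure IsStrategy (A : Game) (σ : Set (List A.M)) : Prop where
  subset_pos : σ ⊆ A.pos
  even_length : ∀ s ∈ σ, Even s.length
  nonempty : σ.Nonempty
  causal : ∀ s a b, s ++ [a, b] ∈ σ → s ∈ σ
  repind : ∀ s t, s ∈ σ → A.equiv s t → t ∈ σ
  det : ∀ s t a b a' b', s ++ [a, b] ∈ σ → t ++ [a', b'] ∈ σ →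
      A.equiv (s ++ [a]) (t ++ [a']) → A.equiv (s ++ [a, b]) (t ++ [a', b'])

/-- A skeleton of a strategy `σ`: a non-empty, causally consistent subset of
`σ` satisfying Uniformization. -/
structure IsSkeletonOf (A : Game) (φ σ : Set (List A.M)) : Prop where
  nonempty : φ.Nonempty
  subset : φ ⊆ σ
  causal : ∀ s a b, s ++ [a, b] ∈ φ → s ∈ φ
  uniformization : ∀ s a b, s ++ [a, b] ∈ σ → s ∈ φ → ∃! b', s ++ [a, b'] ∈ φ

/-- A skeleton in the abstract sense (independently of any strategy):
a non-empty, causally consistent set of even-length positions satisfying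
Functional Determinacy and Functional Representation Independence. -/
structure IsSkeleton (A : Game) (φ : Set (List A.M)) : Prop where
  subset_pos : φ ⊆ A.pos
  even_length : ∀ s ∈ φ, Even s.length
  nonempty : φ.Nonempty
  causal : ∀ s a b, s ++ [a, b] ∈ φ → s ∈ φ
  funDet : ∀ s a b c, s ++ [a, b] ∈ φ → s ++ [a, c] ∈ φ → b = c
  funRepInd : ∀ s t a b a', s ++ [a, b] ∈ φ → t ∈ φ →
      A.equiv (s ++ [a]) (t ++ [a']) →
      ∃! b', t ++ [a', b'] ∈ φ ∧ A.equiv (s ++ [a, b]) (t ++ [a', b'])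

/-- `φ• = { t | ∃ s ∈ φ, s ≈_A t }`, the saturation of `φ` under `≈_A`. -/
def dot (A : Game) (φ : Set (List A.M)) : Set (List A.M) :=
  {t | ∃ s ∈ φ, A.equiv s t}

/-- The preorder `φ ⊑ ψ` on skeletons. -/
def Subeq (A : Game) (φ ψ : Set (List A.M)) : Prop :=
  ∀ s a b s' a', s ++ [a, b] ∈ φ → s' ∈ ψ → A.equiv (s ++ [a]) (s' ++ [a']) →
    ∃ b', s' ++ [a', b'] ∈ ψ ∧ A.equiv (s ++ [a, b]) (s' ++ [a', b'])

end Game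

end AJM


lemma even_split {α : Type*} (l : List α) (h : Even l.length) (hne : l ≠ []) :
    ∃ s a b, l = s ++ [a, b] := by
  rcases l.eq_nil_or_concat with rfl | ⟨l', b, rfl⟩
  · exact absurd rfl hne
  rcases l'.eq_nil_or_concat with rfl | ⟨s, a, rfl⟩
  · simp at h
  · exact ⟨s, a, b, by simp⟩

lemma nil_mem {A : AJM.Game} {φ : Set (List A.M)}
    (hne : φ.Nonempty) (heven : ∀ s ∈ φ, Even s.length)
    (hc : ∀ s a b, s ++ [a, b] ∈ φ → s ∈ φ) : [] ∈ φ := by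
  obtain ⟨s, hs⟩ := hne
  induction' hn : s.length using Nat.strong_induction_on with n ih generalizing s
  subst hn
  by_cases h : s = []
  · exact h ▸ hs
  · obtain ⟨t, a, b, rfl⟩ := even_split s (heven s hs) h
    exact ih t.length (by simp) t (hc _ _ _ hs) rfl

lemma equiv_length {A : AJM.Game} (hA : A.Valid) {s t : List A.M}
    (h : A.equiv s t) : s.length = t.length := by
  have := hA.equiv_lab s t h
  simpa using congrArg List.length this

open AJM Game in
/-- `φ` is a skeleton of `σ` iff `φ` is a skeleton (in the abstract sense)
and `φ• = σ`. -/
theorem skeletonOf_iff (A : Game) (hA : A.Valid)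
    (σ φ : Set (List A.M)) (hσ : IsStrategy A σ) :
    IsSkeletonOf A φ σ ↔ (IsSkeleton A φ ∧ dot A φ = σ) := by
  constructor
  · rintro ⟨hne, hsub, hcau, huni⟩
    have hφpos : φ ⊆ A.pos := fun s hs => hσ.subset_pos (hsub hs)
    have hφeven : ∀ s ∈ φ, Even s.length := fun s hs => hσ.even_length s (hsub hs)
    have hfunDet : ∀ s a b c, s ++ [a, b] ∈ φ → s ++ [a, c] ∈ φ → b = c := by
      intro s a b c hb hc
      have hs : s ∈ φ := hcau _ _ _ hb
      obtain ⟨b', _, hu⟩ := huni s a b (hsub hb) hs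
      exact (hu b hb).trans (hu c hc).symm
    refine ⟨⟨hφpos, hφeven, hne, hcau, hfunDet, ?_⟩, ?_⟩
    · intro s t a b a' hsab ht heq
      obtain ⟨c, hc⟩ := hA.equiv_ext (s ++ [a]) (t ++ [a']) b heq
        (by simpa using hφpos hsab)
      simp only [List.append_assoc] at hc
      have htac : t ++ [a', c] ∈ σ := hσ.repind _ _ (hsub hsab) (by simpa using hc)
      obtain ⟨b', hb', hu⟩ := huni t a' c htac ht
      have hequiv : A.equiv (s ++ [a, b]) (t ++ [a', b']) :=
        hσ.det s t a b a' b' (hsub hsab) (hsub hb') heq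
      refine ⟨b', ⟨hb', hequiv⟩, ?_⟩
      rintro y ⟨hy, -⟩
      exact hfunDet t a' y b' hy hb'
    · ext t
      constructor
      · rintro ⟨s, hs, heq⟩
        exact hσ.repind s t (hsub hs) heq
      · intro ht
        induction' hn : t.length using Nat.strong_induction_on with n ih generalizing t
        subst hn
        by_cases h : t = []
        · subst h
          exact ⟨[], nil_mem hne hφeven hcau, hA.equiv_refl [] (hσ.subset_pos ht)⟩
        obtain ⟨s, a, b, rfl⟩ := even_split t (hσ.even_length t ht) h
        have hsσ : s ∈ σ := hσ.causal s a b ht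
        obtain ⟨s', hs', heq⟩ := ih s.length (by simp) s hsσ rfl
        have hsa : s ++ [a] ∈ A.pos := hA.pos_prefix_closed _ _
          ⟨[b], by simp⟩ (hσ.subset_pos ht)
        obtain ⟨a', heqa⟩ := hA.equiv_ext s s' a (hA.equiv_symm _ _ heq) hsa
        have hsab : s ++ [a] ++ [b] ∈ A.pos := by simpa using hσ.subset_pos ht
        obtain ⟨b'', heqb⟩ := hA.equiv_ext (s ++ [a]) (s' ++ [a']) b heqa hsab
        simp only [List.append_assoc] at heqb
        have : s' ++ [a', b''] ∈ σ := hσ.repind _ _ ht (by simpa using heqb)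
        obtain ⟨b', hb', -⟩ := huni s' a' b'' this hs'
        refine ⟨s' ++ [a', b'], hb', hA.equiv_symm _ _ ?_⟩
        exact hσ.det s s' a b a' b' ht (hsub hb') heqa
  · rintro ⟨⟨hpos, heven, hne, hcau, hfd, hfri⟩, hdot⟩
    have hsub : φ ⊆ σ := by
      intro s hs
      rw [← hdot]
      exact ⟨s, hs, hA.equiv_refl s (hpos hs)⟩
    refine ⟨hne, hsub, hcau, ?_⟩
    intro s a b hsab hs
    rw [← hdot] at hsab
    obtain ⟨u, hu, heq⟩ := hsab
    have hune : u ≠ [] := by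
      intro h
      subst h
      have := equiv_length hA heq
      simp at this
    obtain ⟨u', c, d, rfl⟩ := even_split u (heven u hu) hune
    have hlen : u'.length = s.length := by
      have := equiv_length hA heq
      simpa using this
    have hpre : A.equiv (u' ++ [c]) (s ++ [a]) :=
      hA.equiv_prefix _ _ _ _ heq ⟨[d], by simp⟩ ⟨[b], by simp⟩ (by simp [hlen])
    obtain ⟨b', ⟨hb', -⟩, -⟩ := hfri u' s c d a hu hs hpre
    exact ⟨b', hb', fun y hy => hfd s a y b' hy hb'⟩
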